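/- Let μ', τ, ρ, λ be real numbers with μ' ≥ 0, τ ≥ 0, ρ ≥ 0 and (λ − τ) − τρ > 0. Let a, b, c, d ∈ ℝ satisfy |a| ≤ μ', |b| ≤ τ, |c| ≤ τ and |d − λ| ≤ τ, and let (u, v) ∈ ℝ² with |u| ≤ ρ·|v|. Then |c·u + d·v| ≥ ((λ − τ) − τρ)·|v| > 0 whenever v ≠ 0, and |a·u + b·v| ≤ ((μ'·ρ + τ)/((λ − τ) − τρ)) · |c·u + d·v|; in particular the image vector (a·u + b·v, c·u + d·v) of (u,v) has slope at most (μ'ρ + τ)/((λ − τ) − τρ). -/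

import Mathlib

noncomputable section

/-- Slope estimate for a near-skew-product derivative `[[a, b], [c, d]]` with
`|a| ≤ μ'`, `|b| ≤ τ`, `|c| ≤ τ`, `|d − λ| ≤ τ`: a vector `(u,v)` of slope at most `ρ`
is sent to a vector whose second component satisfies `|cu + dv| ≥ ((λ−τ) − τρ)|v|`
(positive when `v ≠ 0`) and whose slope is at most `(μ'ρ + τ)/((λ−τ) − τρ)`. -/
theorem slope_recursion_estimate (mu' τ ρ lam : ℝ)
    (hmu' : 0 ≤ mu') (hτ : 0 ≤ τ) (hρ : 0 ≤ ρ) (hpos : 0 < (lam - τ) - τ * ρ)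
    (a b c d : ℝ) (ha : |a| ≤ mu') (hb : |b| ≤ τ) (hc : |c| ≤ τ) (hd : |d - lam| ≤ τ)
    (u v : ℝ) (huv : |u| ≤ ρ * |v|) :
    (v ≠ 0 → ((lam - τ) - τ * ρ) * |v| ≤ |c * u + d * v| ∧ 0 < |c * u + d * v|) ∧
    |a * u + b * v| ≤ ((mu' * ρ + τ) / ((lam - τ) - τ * ρ)) * |c * u + d * v| := by
  have hdlb : lam - τ ≤ |d| := by
    have h := abs_sub_abs_le_abs_sub lam d
    rw [abs_sub_comm] at h
    have hlam : |lam| = lam := by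
      have : 0 < lam := by nlinarith [mul_nonneg hτ hρ]
      exact abs_of_pos this
    linarith
  have hkey : ((lam - τ) - τ * ρ) * |v| ≤ |c * u + d * v| := by
    have h1 : |d * v| - |c * u| ≤ |c * u + d * v| := by
      have := abs_sub_abs_le_abs_sub (d * v) (-(c * u))
      simp [sub_neg_eq_add, add_comm] at this
      linarith [this, abs_mul d v, abs_mul c u]
    have h2 : |c * u| ≤ τ * (ρ * |v|) := by
      rw [abs_mul]
      exact mul_le_mul hc huv (abs_nonneg u) hτ
    have h3 : (lam - τ) * |v| ≤ |d * v| := by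
      rw [abs_mul]
      exact mul_le_mul_of_nonneg_right hdlb (abs_nonneg v)
    nlinarith
  constructor
  · intro hv
    refine ⟨hkey, ?_⟩
    have : 0 < ((lam - τ) - τ * ρ) * |v| := mul_pos hpos (abs_pos.mpr hv)
    linarith
  · have hub : |a * u + b * v| ≤ (mu' * ρ + τ) * |v| := by
      have h1 : |a * u| ≤ mu' * (ρ * |v|) := by
        rw [abs_mul]
        exact mul_le_mul ha huv (abs_nonneg u) hmu'
      have h2 : |b * v| ≤ τ * |v| := by
        rw [abs_mul]
        exact mul_le_mul_of_nonneg_right hb (abs_nonneg v)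
      calc |a * u + b * v| ≤ |a * u| + |b * v| := abs_add_le _ _
        _ ≤ (mu' * ρ + τ) * |v| := by nlinarith
    have hK : 0 < (lam - τ) - τ * ρ := hpos
    calc |a * u + b * v| ≤ (mu' * ρ + τ) * |v| := hub
      _ = ((mu' * ρ + τ) / ((lam - τ) - τ * ρ)) * (((lam - τ) - τ * ρ) * |v|) := by
          rw [← mul_assoc, div_mul_cancel₀ _ hK.ne']
      _ ≤ ((mu' * ρ + τ) / ((lam - τ) - τ * ρ)) * |c * u + d * v| := by
          apply mul_le_mul_of_nonneg_left hkey
          positivity
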